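/- The operator Y = T0 + T1 is triangular on ℂ[x]: for every m ∈ ℤ≥0 the polynomial Y(x^m) − γ_m·x^m has degree strictly less than m, where γ_{2n} = t0+t1+n and γ_{2n−1} = −(t0+t1+n). -/

import Mathlib

open Polynomial

lemma coeff_one_sub_X_pow (m k : ℕ) :
    ((1 - (X : Polynomial ℂ))^m).coeff k = (-1)^k * (m.choose k : ℂ) := by
  have h1 : ((1 : Polynomial ℂ) - X)^m = C ((-1:ℂ)^m) * (X + C (-1))^m := by
    rw [C_pow, ← mul_pow]
    congr 1
    simp only [map_neg, map_one]
    ring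
  rw [h1, coeff_C_mul, coeff_X_add_C_pow]
  by_cases hk : k ≤ m
  · have h3 : ((-1:ℂ))^m = (-1)^(m-k) * (-1)^k := by
      rw [← pow_add, Nat.sub_add_cancel hk]
    have h2 : ((-1:ℂ))^(m-k) * ((-1:ℂ))^(m-k) = 1 := by
      rw [← mul_pow]; norm_num
    rw [h3]
    linear_combination ((-1:ℂ)^k * (m.choose k : ℂ)) * h2
  · push_neg at hk
    simp [Nat.choose_eq_zero_of_lt hk]

theorem statement2 (t0 u0 t1 u1 a b c d : ℂ)
    (ha : a = t1 + u1) (hb : b = t1 - u1)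
    (hc : c = t0 + u0 + 1/2) (hd : d = t0 - u0 + 1/2)
    (T0 T1 : Polynomial ℂ → Polynomial ℂ)
    (hT0 : ∀ (f : Polynomial ℂ) (x : ℂ),
      (1 - 2*x) * ((T0 f).eval x - t0 * f.eval x) =
        (c - x) * (d - x) * (f.eval (1 - x) - f.eval x))
    (hT1 : ∀ (f : Polynomial ℂ) (x : ℂ),
      (2*x) * ((T1 f).eval x - t1 * f.eval x) =
        (a + x) * (b + x) * (f.eval (-x) - f.eval x))
    (γ : ℕ → ℂ)
    (hγe : ∀ n : ℕ, γ (2*n) = t0 + t1 + n)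
    (hγo : ∀ n : ℕ, γ (2*n+1) = -(t0 + t1 + (n+1))) :
    ∀ m : ℕ, (T0 (X^m) + T1 (X^m) - γ m • (X^m : Polynomial ℂ)).degree
      < (m : WithBot ℕ) := by
  intro m
  set g : Polynomial ℂ := T0 (X^m) + T1 (X^m) - γ m • (X^m) with hg
  set A : Polynomial ℂ := 2*X*(C c - X)*(C d - X) with hA
  set P : Polynomial ℂ :=
    A * ((1 - X)^m - X^m)
    + (1 - 2*X)*(C a + X)*(C b + X) * C ((-1)^m - 1) * X^m
    + (2*X - 4*X^2) * C (t0 + t1 - γ m) * X^m with hP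
  have key : (2*X - 4*X^2 : Polynomial ℂ) * g = P := by
    apply Polynomial.funext
    intro x
    have h0 := hT0 (X^m) x
    have h1 := hT1 (X^m) x
    simp only [eval_pow, eval_X, eval_one, eval_sub, eval_neg] at h0 h1
    rw [neg_pow] at h1
    simp only [hg, hA, hP, eval_mul, eval_add, eval_sub, eval_pow, eval_X, eval_C,
      eval_one, eval_smul, smul_eq_mul, eval_ofNat]
    linear_combination (2*x) * h0 + (1 - 2*x) * h1
  have hPlt : P.degree < ((m : ℕ) + 2 : ℕ) := by
    rcases m with _ | m'
    · have hγ0 : γ 0 = t0 + t1 := by simpa using hγe 0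
      have hP0 : P = 0 := by
        rw [hP, hγ0]
        simp
      rw [hP0, degree_zero]
      exact WithBot.bot_lt_coe _
    · -- m = m' + 1
      set σ : ℂ := (-1)^(m'+1) with hσ
      set μ : ℂ := (-1)^m' * (m'+1 : ℂ) with hμ
      set R : Polynomial ℂ := (1 - X)^(m'+1) - C σ * X^(m'+1) - C μ * X^m' with hR
      have hRlt : R.degree < (m' : ℕ) := by
        rw [degree_lt_iff_coeff_zero]
        intro k hk
        simp only [hR, coeff_sub, coeff_one_sub_X_pow, coeff_C_mul, coeff_X_pow]
        by_cases h7 : k = m'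
        · subst h7
          rw [if_neg (show ¬ k = k+1 by omega), if_pos rfl, Nat.choose_succ_self_right]
          simp only [hμ, mul_zero, sub_zero, mul_one]
          push_cast
          ring
        · by_cases h8 : k = m'+1
          · subst h8
            rw [if_pos rfl, if_neg h7, Nat.choose_self]
            simp [hσ]
          · rw [Nat.choose_eq_zero_of_lt (by omega), if_neg h8, if_neg h7]
            simp
      set k0 : ℂ := t0 + t1 - γ (m'+1) with hk0
      set Bp : Polynomial ℂ := -A + (1-2*X)*(C a + X)*(C b + X) * C ((-1)^(m'+1) - 1)
        + (2*X-4*X^2)*C k0 with hBp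
      set W : Polynomial ℂ := (C σ * A + Bp) * X + C μ * A with hW
      have hPdecomp : P = A * R + W * X^m' := by
        rw [hP, hR, hW, hBp, hσ, hμ]
        ring
      have hWdeg : W.degree ≤ 2 := by
        rcases Nat.even_or_odd m' with ⟨n, hn⟩ | ⟨n, hn⟩
        · -- m' = n + n even, m odd = 2n+1
          have hγ : γ (m'+1) = -(t0 + t1 + (n+1)) := by
            rw [hn, show n + n + 1 = 2*n+1 by ring, hγo n]
          have hodd : ((-1:ℂ))^(m'+1) = -1 := Odd.neg_one_pow ⟨n, by omega⟩
          have heven : ((-1:ℂ))^(m') = 1 := Even.neg_one_pow ⟨n, by omega⟩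
          have hm : (m' : ℂ) = 2*n := by rw [hn]; push_cast; ring
          have hWq : W = C (2*μ*(c*d) - 2*(a*b)) * X
              + C (4*(a*b) - 4*(c*d) - 2*(a+b) + 2*k0 - 2*μ*(c+d)) * X^2 := by
            apply Polynomial.funext
            intro x
            simp only [hW, hBp, hA, hσ, hμ, hk0, eval_mul, eval_add,
              eval_sub, eval_pow, eval_X, eval_C, eval_one, eval_neg, eval_ofNat]
            rw [hγ, hodd, heven, hm, ha, hb, hc, hd]
            ring
          rw [hWq]
          compute_degree
        · -- m' = 2n+1 odd, m even = 2n+2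
          have hγ : γ (m'+1) = t0 + t1 + (n+1) := by
            rw [hn, show 2*n + 1 + 1 = 2*(n+1) by ring, hγe (n+1)]
            push_cast; ring
          have heven : ((-1:ℂ))^(m'+1) = 1 := Even.neg_one_pow ⟨n+1, by omega⟩
          have hodd : ((-1:ℂ))^(m') = -1 := Odd.neg_one_pow ⟨n, by omega⟩
          have hm : (m' : ℂ) = 2*n+1 := by rw [hn]; push_cast; ring
          have hWq : W = C (2*μ*(c*d)) * X + C (2*k0 - 2*μ*(c+d)) * X^2 := by
            apply Polynomial.funext
            intro x
            simp only [hW, hBp, hA, hσ, hμ, hk0, eval_mul, eval_add,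
              eval_sub, eval_pow, eval_X, eval_C, eval_one, eval_neg, eval_ofNat]
            rw [hγ, hodd, heven, hm, ha, hb, hc, hd]
            ring
          rw [hWq]
          compute_degree
      have hAdeg : A.degree ≤ 3 := by
        rw [hA]; compute_degree
      have hAR : (A * R).degree < ((m' + 3 : ℕ) : WithBot ℕ) := by
        rcases eq_or_ne (A * R) 0 with h | h
        · rw [h, degree_zero]; exact WithBot.bot_lt_coe _
        · rw [mul_ne_zero_iff] at h
          rw [degree_mul, Polynomial.degree_eq_natDegree h.2]
          have hrm : R.natDegree < m' := by
            have h6 := hRlt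
            rw [Polynomial.degree_eq_natDegree h.2] at h6
            exact_mod_cast h6
          calc A.degree + (R.natDegree : WithBot ℕ)
              ≤ 3 + (R.natDegree : WithBot ℕ) := by gcongr
            _ = ((3 + R.natDegree : ℕ) : WithBot ℕ) := by push_cast; ring
            _ < ((m' + 3 : ℕ) : WithBot ℕ) := by exact_mod_cast (by omega : 3 + R.natDegree < m' + 3)
      have hWX : (W * X^m').degree < ((m' + 3 : ℕ) : WithBot ℕ) := by
        apply lt_of_le_of_lt (degree_mul_le _ _)
        calc W.degree + (X^m' : Polynomial ℂ).degree
            ≤ 2 + (m' : WithBot ℕ) := by rw [degree_X_pow]; gcongr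
          _ = ((2 + m' : ℕ) : WithBot ℕ) := by push_cast; ring
          _ < ((m' + 3 : ℕ) : WithBot ℕ) := by exact_mod_cast (by omega : 2 + m' < m' + 3)
      rw [hPdecomp]
      have : ((m' + 1 : ℕ) + 2 : ℕ) = (m' + 3 : ℕ) := by omega
      rw [this]
      exact lt_of_le_of_lt (degree_add_le _ _) (max_lt hAR hWX)
  -- conclude
  rcases eq_or_ne g 0 with h | h
  · rw [h, degree_zero]; exact WithBot.bot_lt_coe _
  · have hmul := degree_mul (p := (2*X - 4*X^2 : Polynomial ℂ)) (q := g)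
    rw [key] at hmul
    have h2 : (2*X - 4*X^2 : Polynomial ℂ).degree = 2 := by
      compute_degree!
    rw [h2, Polynomial.degree_eq_natDegree h] at hmul
    rw [Polynomial.degree_eq_natDegree h]
    have : ((2 : WithBot ℕ) + g.natDegree) < ((m : ℕ) + 2 : ℕ) := hmul ▸ hPlt
    have h3 : ((2 + g.natDegree : ℕ) : WithBot ℕ) < ((m + 2 : ℕ) : WithBot ℕ) := by
      convert this using 2
      norm_cast
    have h4 : 2 + g.natDegree < m + 2 := by exact_mod_cast h3
    exact_mod_cast (by omega : g.natDegree < m)
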